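/- Let d ≥ 2 and let X, Y ⊆ 𝕋 be rotation sets for m_d. If X and Y have the same collection of major gaps, i.e. the set of connected components of 𝕋∖X of length ≥ 1/d equals the set of connected components of 𝕋∖Y of length ≥ 1/d, then X = Y. In other words, a rotation set is uniquely determined by its major gaps. -/

import Mathlib

open Set MeasureTheory ENNReal

noncomputable section

instance : Fact ((0:ℝ) < 1) := ⟨one_pos⟩

/-- The circle `ℝ/ℤ`. -/
abbrev Circle1 : Type := AddCircle (1 : ℝ)

/-- The multiplication-by-`d` map `m_d` on the circle. -/
def md (d : ℕ) : Circle1 → Circle1 := fun t => d • t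

/-- `G : ℝ → ℝ` (monotone, commuting with `x ↦ x + 1`) is a lift of the circle map `g`. -/
def IsLift (g : Circle1 → Circle1) (G : CircleDeg1Lift) : Prop :=
  ∀ x : ℝ, g ((x : ℝ) : Circle1) = ((G x : ℝ) : Circle1)

/-- `g` is a monotone degree-one circle map. -/
def IsMonotoneDeg1 (g : Circle1 → Circle1) : Prop :=
  ∃ G : CircleDeg1Lift, IsLift g G

/-- `ρ` is the rotation number of the monotone degree-one circle map `g`:
the residue class mod `ℤ` of the translation number of a lift of `g`. -/
def HasRotationNumber (g : Circle1 → Circle1) (ρ : Circle1) : Prop :=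
  ∃ G : CircleDeg1Lift, IsLift g G ∧ ρ = ((G.translationNumber : ℝ) : Circle1)

/-- `X` is a rotation set for `m_d`. -/
def IsRotationSet (d : ℕ) (X : Set Circle1) : Prop :=
  X.Nonempty ∧ IsCompact X ∧ md d '' X = X ∧
    ∃ g : Circle1 → Circle1, IsMonotoneDeg1 g ∧ ∀ t ∈ X, g t = md d t

/-- `X` is a rotation set for `m_d` with rotation number `ρ`. -/
def IsRotationSetWith (d : ℕ) (X : Set Circle1) (ρ : Circle1) : Prop :=
  X.Nonempty ∧ IsCompact X ∧ md d '' X = X ∧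
    ∃ g : Circle1 → Circle1, (∀ t ∈ X, g t = md d t) ∧ HasRotationNumber g ρ

/-- A gap of `X` is a connected component of the complement of `X`. -/
def IsGap (X : Set Circle1) (I : Set Circle1) : Prop :=
  ∃ t ∈ Xᶜ, I = connectedComponentIn Xᶜ t

/-- `C` is a periodic orbit (cycle) of `m_d`. -/
def IsPeriodicOrbit (d : ℕ) (C : Set Circle1) : Prop :=
  ∃ (t : Circle1) (n : ℕ), 0 < n ∧ (md d)^[n] t = t ∧
    C = Set.range (fun k : Fin n => (md d)^[(k : ℕ)] t)

/-- The number of points of `X` whose representative in `[0,1)` lies in `[0,1/2)`. -/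
def s1 (X : Set Circle1) : ℕ :=
  {t ∈ X | ((AddCircle.equivIco 1 0 t : ℝ) < 1 / 2)}.ncard

/-! ### Auxiliary lemmas -/

lemma coe_eq_coe_iff {x y : ℝ} : (x : Circle1) = (y : Circle1) ↔ ∃ k : ℤ, y = x + k := by
  rw [QuotientAddGroup.eq_iff_sub_mem, AddSubgroup.mem_zmultiples_iff]
  constructor
  · rintro ⟨k, hk⟩
    exact ⟨-k, by simp at hk ⊢; linarith⟩
  · rintro ⟨k, rfl⟩
    exact ⟨-k, by simp⟩

lemma md_coe (d : ℕ) (s : ℝ) : md d (s : Circle1) = (((d:ℝ) * s : ℝ) : Circle1) := by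
  show (d : ℕ) • ((s : ℝ) : Circle1) = _
  rw [← AddCircle.coe_nsmul, nsmul_eq_mul]

lemma md_iter_coe (d : ℕ) (n : ℕ) : ∀ s : ℝ,
    (md d)^[n] ((s : ℝ) : Circle1) = (((d:ℝ)^n * s : ℝ) : Circle1) := by
  induction n with
  | zero => intro s; simp
  | succ n ih =>
    intro s
    rw [Function.iterate_succ_apply, md_coe, ih ((d:ℝ) * s)]
    congr 1
    ring

lemma isOpenMap_coe1 : IsOpenMap ((↑) : ℝ → Circle1) :=
  QuotientAddGroup.isOpenMap_coe

lemma volume_image_Ioo {a b : ℝ} (hab : a < b) (hle : b ≤ a + 1) :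
    volume (((↑) : ℝ → Circle1) '' Ioo a b) = ENNReal.ofReal (b - a) := by
  have hopen : IsOpen (((↑) : ℝ → Circle1) '' Ioo a b) := isOpenMap_coe1 _ isOpen_Ioo
  have hmeas := hopen.measurableSet
  have hmp := AddCircle.measurePreserving_mk (T := 1) a
  have h1 : volume (((↑) : ℝ → Circle1) '' Ioo a b)
      = volume.restrict (Ioc a (a + 1)) (((↑) : ℝ → Circle1) ⁻¹' ((↑) '' Ioo a b)) :=
    (hmp.measure_preimage hmeas.nullMeasurableSet).symm
  rw [h1, Measure.restrict_apply' measurableSet_Ioc]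
  have heq : (((↑) : ℝ → Circle1) ⁻¹' ((↑) '' Ioo a b)) ∩ Ioc a (a + 1) = Ioo a b := by
    ext y
    constructor
    · rintro ⟨hy1, hy2⟩
      obtain ⟨z, hz, hzy⟩ := hy1
      obtain ⟨k, hk⟩ := coe_eq_coe_iff.mp hzy
      have hk0 : k = 0 := by
        have h1 : (k : ℝ) < 1 := by
          have := hy2.2; have := hz.1; push_cast at *; linarith
        have h2 : (-1 : ℝ) < (k : ℝ) := by
          have := hy2.1; have := hz.2; push_cast at *; linarith
        have h1' : k < 1 := by exact_mod_cast h1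
        have h2' : (-1:ℤ) < k := by exact_mod_cast h2
        omega
      subst hk0
      simp only [Int.cast_zero, add_zero] at hk
      subst hk; exact hz
    · intro hy
      exact ⟨⟨y, hy, rfl⟩, ⟨hy.1, le_trans hy.2.le hle⟩⟩
  rw [heq, Real.volume_Ioo]

lemma component_eq {X : Set Circle1} (hXc : IsClosed X) {a b s : ℝ}
    (ha : (a : Circle1) ∈ X) (hb : (b : Circle1) ∈ X)
    (hgap : ∀ y ∈ Ioo a b, ((y : ℝ) : Circle1) ∉ X) (hs : s ∈ Ioo a b) :
    connectedComponentIn Xᶜ ((s : ℝ) : Circle1) = ((↑) : ℝ → Circle1) '' Ioo a b := by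
  set S : Set Circle1 := ((↑) : ℝ → Circle1) '' Ioo a b with hS
  have hSopen : IsOpen S := isOpenMap_coe1 _ isOpen_Ioo
  have hSsub : S ⊆ Xᶜ := by
    rintro _ ⟨z, hz, rfl⟩; exact hgap z hz
  have hscont : Continuous ((↑) : ℝ → Circle1) := continuous_quotient_mk'
  have hSconn : IsPreconnected S := (isPreconnected_Ioo).image _ hscont.continuousOn
  have htS : ((s : ℝ) : Circle1) ∈ S := mem_image_of_mem _ hs
  have hclos : closure S ⊆ ((↑) : ℝ → Circle1) '' Icc a b := by
    apply closure_minimal (image_mono Ioo_subset_Icc_self)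
    exact (isCompact_Icc.image hscont).isClosed
  have hcover : Xᶜ ⊆ S ∪ (Xᶜ \ closure S) := by
    intro z hz
    by_cases hzc : z ∈ closure S
    · left
      obtain ⟨w, hw, rfl⟩ := hclos hzc
      rcases eq_or_lt_of_le hw.1 with h1 | h1
      · exact absurd (h1 ▸ ha) hz
      rcases eq_or_lt_of_le hw.2 with h2 | h2
      · exact absurd (h2 ▸ hb) hz
      exact mem_image_of_mem _ ⟨h1, h2⟩
    · exact Or.inr ⟨hz, hzc⟩
  have hdisj : Disjoint S (Xᶜ \ closure S) :=
    Set.disjoint_left.mpr fun x hx hx2 => hx2.2 (subset_closure hx)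
  apply le_antisymm
  · exact isPreconnected_connectedComponentIn.subset_left_of_subset_union hSopen
      (hXc.isOpen_compl.sdiff isClosed_closure) hdisj
      ((connectedComponentIn_subset _ _).trans hcover)
      ⟨_, mem_connectedComponentIn (hSsub htS), htS⟩
  · exact hSconn.subset_connectedComponentIn htS hSsub

/-- The key doubling step: the image of a minor gap is again a gap. -/
lemma gap_step (d : ℕ) (hd : 2 ≤ d) {X : Set Circle1} (himg : md d '' X = X)
    (G : CircleDeg1Lift) (hG : ∀ s : ℝ, (s : Circle1) ∈ X → ∃ k : ℤ, G s = d * s + k)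
    {a b : ℝ} (ha : (a : Circle1) ∈ X) (hb : (b : Circle1) ∈ X)
    (hgap : ∀ y ∈ Ioo a b, ((y : ℝ) : Circle1) ∉ X)
    (hlt : 0 < b - a) (hsmall : b - a < 1 / d) :
    (((d:ℝ) * a : ℝ) : Circle1) ∈ X ∧ (((d:ℝ) * b : ℝ) : Circle1) ∈ X ∧
      ∀ y ∈ Ioo ((d:ℝ) * a) ((d:ℝ) * b), ((y : ℝ) : Circle1) ∉ X := by
  have hd0 : (0:ℝ) < d := by positivity
  have hmem : ∀ s : ℝ, (s : Circle1) ∈ X → (((d:ℝ) * s : ℝ) : Circle1) ∈ X := by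
    intro s hs
    rw [← md_coe, ← himg]
    exact mem_image_of_mem _ hs
  refine ⟨hmem a ha, hmem b hb, ?_⟩
  rintro y ⟨hy1, hy2⟩ hyX
  have hy' : (y : Circle1) ∈ md d '' X := by rw [himg]; exact hyX
  obtain ⟨u, huX, hu⟩ := hy'
  obtain ⟨x₀, rfl⟩ := QuotientAddGroup.mk_surjective u
  rw [md_coe] at hu
  obtain ⟨m₀, hm₀⟩ := coe_eq_coe_iff.mp hu
  set j : ℤ := ⌈x₀ - a - 1⌉ with hj
  set x : ℝ := x₀ - j with hx
  have hxX : (x : Circle1) ∈ X := by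
    have hxj : (x : Circle1) = (x₀ : Circle1) := coe_eq_coe_iff.mpr ⟨j, by rw [hx]; ring⟩
    rw [hxj]; exact huX
  have hx1 : a < x := by
    have := Int.ceil_lt_add_one (x₀ - a - 1)
    rw [hx]; push_cast at this ⊢; linarith
  have hx2 : x ≤ a + 1 := by
    have := Int.le_ceil (x₀ - a - 1)
    rw [hx]; push_cast at this ⊢; linarith
  have hbx : b ≤ x := by
    by_contra hc; push_neg at hc; exact hgap x ⟨hx1, hc⟩ hxX
  set m : ℤ := -m₀ - (d:ℤ) * j with hm
  have hdx : (d:ℝ) * x = y + m := by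
    rw [hx, hm]; push_cast; linarith [hm₀]
  obtain ⟨ka, hka⟩ := hG a ha
  obtain ⟨kb, hkb⟩ := hG b hb
  obtain ⟨kx, hkx⟩ := hG x hxX
  have hmono := G.monotone
  have e1 : (d:ℝ) * a + ka ≤ (d:ℝ) * b + kb := by
    rw [← hka, ← hkb]; exact hmono (by linarith)
  have e2 : (d:ℝ) * b + kb ≤ (d:ℝ) * x + kx := by
    rw [← hkb, ← hkx]; exact hmono hbx
  have e3 : (d:ℝ) * x + kx ≤ (d:ℝ) * a + ka + 1 := by
    rw [← hkx, ← hka]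
    have := hmono hx2
    rwa [G.map_add_one] at this
  have hdsmall : (d:ℝ) * (b - a) < 1 := by
    have := mul_lt_mul_of_pos_left hsmall hd0
    rwa [mul_one_div, div_self hd0.ne'] at this
  have hkb_eq : kb = ka := by
    have h1 : ((kb : ℝ) - ka) ≤ 1 - (d:ℝ) * (b - a) := by nlinarith [e2, e3]
    have h2 : -((d:ℝ) * (b - a)) ≤ (kb : ℝ) - ka := by nlinarith [e1]
    have h1' : kb - ka < 1 := by
      have : ((kb - ka : ℤ) : ℝ) < 1 := by push_cast; nlinarith [mul_pos hd0 hlt]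
      exact_mod_cast this
    have h2' : (-1:ℤ) < kb - ka := by
      have : (-1 : ℝ) < ((kb - ka : ℤ) : ℝ) := by push_cast; nlinarith [hdsmall]
      exact_mod_cast this
    omega
  set M : ℤ := m + kx - kb with hMdef
  have hM1 : (0:ℝ) < M := by
    have : (d:ℝ) * b + kb ≤ y + m + kx := by rw [← hdx]; linarith [e2]
    push_cast [hMdef]; linarith [hy2]
  have hM2 : (M : ℝ) < 1 := by
    have : y + m + kx ≤ (d:ℝ) * a + ka + 1 := by rw [← hdx]; linarith [e3]
    push_cast [hMdef, hkb_eq]; linarith [hy1]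
  have hM1' : (1:ℤ) ≤ M := by
    have : (0:ℤ) < M := by exact_mod_cast hM1
    omega
  have : (1:ℝ) ≤ (M:ℝ) := by exact_mod_cast hM1'
  linarith

lemma gap_iter (d : ℕ) (hd : 2 ≤ d) {X : Set Circle1} (himg : md d '' X = X)
    (G : CircleDeg1Lift) (hG : ∀ s : ℝ, (s : Circle1) ∈ X → ∃ k : ℤ, G s = d * s + k)
    {a b : ℝ} (ha : (a : Circle1) ∈ X) (hb : (b : Circle1) ∈ X)
    (hgap : ∀ y ∈ Ioo a b, ((y : ℝ) : Circle1) ∉ X) (hlt : 0 < b - a) :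
    ∀ n : ℕ, (∀ m, m < n → (d:ℝ)^m * (b - a) < 1 / d) →
      (((d:ℝ)^n * a : ℝ) : Circle1) ∈ X ∧ (((d:ℝ)^n * b : ℝ) : Circle1) ∈ X ∧
        ∀ y ∈ Ioo ((d:ℝ)^n * a) ((d:ℝ)^n * b), ((y : ℝ) : Circle1) ∉ X := by
  have hd0 : (0:ℝ) < d := by positivity
  intro n
  induction n with
  | zero =>
    intro _
    simp only [pow_zero, one_mul]
    exact ⟨ha, hb, hgap⟩
  | succ n ih =>
    intro hsm
    obtain ⟨hA, hB, hg⟩ := ih (fun m hm => hsm m (hm.trans n.lt_succ_self))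
    have hdiff : (d:ℝ)^n * b - (d:ℝ)^n * a = (d:ℝ)^n * (b - a) := by ring
    have hlt' : 0 < (d:ℝ)^n * b - (d:ℝ)^n * a := by
      rw [hdiff]; positivity
    have hsmall' : (d:ℝ)^n * b - (d:ℝ)^n * a < 1 / d := by
      rw [hdiff]; exact hsm n n.lt_succ_self
    obtain ⟨h1, h2, h3⟩ := gap_step d hd himg G hG hA hB hg hlt' hsmall'
    have ea : (d:ℝ) * ((d:ℝ)^n * a) = (d:ℝ)^(n+1) * a := by ring
    have eb : (d:ℝ) * ((d:ℝ)^n * b) = (d:ℝ)^(n+1) * b := by ring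
    rw [ea] at h1
    rw [eb] at h2
    rw [ea, eb] at h3
    exact ⟨h1, h2, h3⟩

lemma exists_gap {X : Set Circle1} (hXne : X.Nonempty) (hXc : IsClosed X) {s : ℝ}
    (hs : ((s : ℝ) : Circle1) ∉ X) :
    ∃ a b : ℝ, (a : Circle1) ∈ X ∧ (b : Circle1) ∈ X ∧
      (∀ y ∈ Ioo a b, ((y : ℝ) : Circle1) ∉ X) ∧ s ∈ Ioo a b ∧ b ≤ a + 1 := by
  obtain ⟨t₀, ht₀⟩ := hXne
  obtain ⟨x₀, rfl⟩ := QuotientAddGroup.mk_surjective t₀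
  have hcont : Continuous ((↑) : ℝ → Circle1) := continuous_quotient_mk'
  have hAc : IsClosed {y : ℝ | (y : Circle1) ∈ X} := hXc.preimage hcont
  have hshift : ∀ (y : ℝ) (k : ℤ), ((y + k : ℝ) : Circle1) = (y : Circle1) :=
    fun y k => (coe_eq_coe_iff.mpr ⟨k, rfl⟩).symm
  set Aa : Set ℝ := {y : ℝ | (y : Circle1) ∈ X} ∩ Iic s with hAa
  set Ab : Set ℝ := {y : ℝ | (y : Circle1) ∈ X} ∩ Ici s with hAb
  have hAane : Aa.Nonempty := by
    refine ⟨x₀ + (-⌈x₀ - s⌉ : ℤ), ?_, ?_⟩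
    · show ((x₀ + (-⌈x₀ - s⌉ : ℤ) : ℝ) : Circle1) ∈ X
      rw [hshift]; exact ht₀
    · show x₀ + ((-⌈x₀ - s⌉ : ℤ) : ℝ) ≤ s
      have := Int.le_ceil (x₀ - s); push_cast; linarith
  have hAbne : Ab.Nonempty := by
    refine ⟨x₀ + (⌈s - x₀⌉ : ℤ), ?_, ?_⟩
    · show ((x₀ + (⌈s - x₀⌉ : ℤ) : ℝ) : Circle1) ∈ X
      rw [hshift]; exact ht₀
    · show s ≤ x₀ + ((⌈s - x₀⌉ : ℤ) : ℝ)
      have := Int.le_ceil (s - x₀); push_cast; linarith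
  have hAabdd : BddAbove Aa := ⟨s, fun y hy => hy.2⟩
  have hAbbdd : BddBelow Ab := ⟨s, fun y hy => hy.2⟩
  set a : ℝ := sSup Aa with hadef
  set b : ℝ := sInf Ab with hbdef
  have haA : a ∈ Aa := (hAc.inter isClosed_Iic).csSup_mem hAane hAabdd
  have hbA : b ∈ Ab := (hAc.inter isClosed_Ici).csInf_mem hAbne hAbbdd
  have has : a < s := lt_of_le_of_ne haA.2 (fun h => hs (h ▸ haA.1))
  have hsb : s < b := lt_of_le_of_ne hbA.2 (fun h => hs (by rw [h]; exact hbA.1))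
  refine ⟨a, b, haA.1, hbA.1, ?_, ⟨has, hsb⟩, ?_⟩
  · rintro y ⟨hy1, hy2⟩ hyX
    rcases le_total y s with h | h
    · exact absurd (le_csSup hAabdd ⟨hyX, h⟩) (not_le.mpr hy1)
    · exact absurd (csInf_le hAbbdd ⟨hyX, h⟩) (not_le.mpr hy2)
  · have ha1 : ((a + 1 : ℝ) : Circle1) ∈ X := by
      have := hshift a 1; push_cast at this; rw [this]; exact haA.1
    have hgt : s < a + 1 := by
      by_contra hc
      push_neg at hc
      exact absurd (le_csSup hAabdd ⟨ha1, hc⟩) (by linarith)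
    exact csInf_le hAbbdd ⟨ha1, hgt.le⟩

lemma escapes (d : ℕ) (hd : 2 ≤ d) {X : Set Circle1} (hX : IsRotationSet d X)
    {t : Circle1} (ht : t ∉ X) :
    ∃ (n : ℕ) (I : Set Circle1), IsGap X I ∧ 1 / (d : ℝ≥0∞) ≤ volume I ∧ (md d)^[n] t ∈ I := by
  obtain ⟨hne, hcomp, himg, g, ⟨G, hlift⟩, hagree⟩ := hX
  have hd0 : (0:ℝ) < d := by positivity
  have hd1 : (1:ℝ) < (d:ℝ) := by exact_mod_cast Nat.lt_of_lt_of_le one_lt_two hd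
  have hXc : IsClosed X := hcomp.isClosed
  have hG : ∀ s : ℝ, (s : Circle1) ∈ X → ∃ k : ℤ, G s = d * s + k := by
    intro s hsX
    have h1 : ((G s : ℝ) : Circle1) = (((d:ℝ) * s : ℝ) : Circle1) := by
      rw [← hlift s, hagree _ hsX, md_coe]
    obtain ⟨k, hk⟩ := coe_eq_coe_iff.mp h1
    exact ⟨-k, by push_cast; linarith⟩
  obtain ⟨s, rfl⟩ := QuotientAddGroup.mk_surjective t
  obtain ⟨a, b, ha, hb, hgap, hsab, hble⟩ := exists_gap hne hXc ht
  have hlt : 0 < b - a := sub_pos.mpr (hsab.1.trans hsab.2)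
  have hex : ∃ n : ℕ, 1 / (d:ℝ) ≤ (d:ℝ)^n * (b - a) := by
    obtain ⟨n, hn⟩ := pow_unbounded_of_one_lt ((1/(d:ℝ)) / (b - a)) hd1
    rw [div_lt_iff₀ hlt] at hn
    exact ⟨n, by linarith⟩
  obtain ⟨n₀, hP, hmin⟩ : ∃ n : ℕ, 1 / (d:ℝ) ≤ (d:ℝ)^n * (b - a) ∧
      ∀ m, m < n → (d:ℝ)^m * (b - a) < 1 / d :=
    ⟨Nat.find hex, Nat.find_spec hex, fun m hm => not_le.mp (Nat.find_min hex hm)⟩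
  obtain ⟨hA, hB, hg⟩ := gap_iter d hd himg G hG ha hb hgap hlt n₀ hmin
  have hlen1 : (d:ℝ)^n₀ * (b - a) ≤ 1 := by
    rcases Nat.eq_zero_or_pos n₀ with h0 | hpos
    · rw [h0]; simp only [pow_zero, one_mul]; linarith
    · obtain ⟨m, rfl⟩ : ∃ m, n₀ = m + 1 := ⟨n₀ - 1, by omega⟩
      have hm := hmin m m.lt_succ_self
      have h2 : (d:ℝ)^(m+1) * (b - a) = (d:ℝ) * ((d:ℝ)^m * (b-a)) := by ring
      rw [h2]
      calc (d:ℝ) * ((d:ℝ)^m * (b-a)) ≤ (d:ℝ) * (1/d) :=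
            mul_le_mul_of_nonneg_left hm.le hd0.le
        _ = 1 := by field_simp
  set a' : ℝ := (d:ℝ)^n₀ * a with ha'
  set b' : ℝ := (d:ℝ)^n₀ * b with hb'
  have hdiff : b' - a' = (d:ℝ)^n₀ * (b - a) := by rw [ha', hb']; ring
  have hab' : a' < b' := by
    have : 0 < b' - a' := by rw [hdiff]; positivity
    linarith
  have hble' : b' ≤ a' + 1 := by
    have : b' - a' ≤ 1 := hdiff ▸ hlen1
    linarith
  have hsn : (d:ℝ)^n₀ * s ∈ Ioo a' b' := by
    constructor
    · exact mul_lt_mul_of_pos_left hsab.1 (by positivity)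
    · exact mul_lt_mul_of_pos_left hsab.2 (by positivity)
  refine ⟨n₀, ((↑) : ℝ → Circle1) '' Ioo a' b', ?_, ?_, ?_⟩
  · exact ⟨(((d:ℝ)^n₀ * s : ℝ) : Circle1), hg _ hsn, (component_eq hXc hA hB hg hsn).symm⟩
  · rw [volume_image_Ioo hab' hble']
    have h1 : 1 / (d : ℝ≥0∞) = ENNReal.ofReal (1 / (d:ℝ)) := by
      rw [ENNReal.ofReal_div_of_pos hd0, ENNReal.ofReal_one, ENNReal.ofReal_natCast]
    rw [h1]
    exact ENNReal.ofReal_le_ofReal (by rw [hdiff]; exact hP)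
  · rw [md_iter_coe]
    exact mem_image_of_mem _ hsn

lemma mem_rotation_iff (d : ℕ) (hd : 2 ≤ d) {X : Set Circle1} (hX : IsRotationSet d X)
    (t : Circle1) :
    t ∈ X ↔ ∀ (n : ℕ) (I : Set Circle1),
      IsGap X I → 1 / (d : ℝ≥0∞) ≤ volume I → (md d)^[n] t ∉ I := by
  constructor
  · intro htX n I hI hvol
    have hiter : ∀ m : ℕ, (md d)^[m] t ∈ X := by
      intro m
      induction m with
      | zero => exact htX
      | succ m ih =>
        rw [Function.iterate_succ_apply']
        rw [← hX.2.2.1]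
        exact mem_image_of_mem _ ih
    obtain ⟨u, _, rfl⟩ := hI
    exact fun hmem => (connectedComponentIn_subset _ _ hmem) (hiter n)
  · intro H
    by_contra ht
    obtain ⟨n, I, hI, hvol, hmem⟩ := escapes d hd hX ht
    exact H n I hI hvol hmem

/-- A rotation set is uniquely determined by its major gaps. -/
theorem rotation_set_determined_by_major_gaps
    (d : ℕ) (hd : 2 ≤ d) (X Y : Set Circle1)
    (hX : IsRotationSet d X) (hY : IsRotationSet d Y)
    (h : {I : Set Circle1 | IsGap X I ∧ 1 / (d : ℝ≥0∞) ≤ volume I} =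
         {I : Set Circle1 | IsGap Y I ∧ 1 / (d : ℝ≥0∞) ≤ volume I}) :
    X = Y := by
  have h' := Set.ext_iff.mp h
  simp only [mem_setOf_eq] at h'
  ext t
  rw [mem_rotation_iff d hd hX t, mem_rotation_iff d hd hY t]
  constructor
  · intro H n I hI hvol
    obtain ⟨hI', hvol'⟩ := (h' I).mpr ⟨hI, hvol⟩
    exact H n I hI' hvol'
  · intro H n I hI hvol
    obtain ⟨hI', hvol'⟩ := (h' I).mp ⟨hI, hvol⟩
    exact H n I hI' hvol'
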